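/- Let Θ = Q_Θ Λ_Θ Q_Θ^T with Q_Θ a p×p orthogonal matrix and Λ_Θ diagonal with entries λ_{Θ,1} ≤ … ≤ λ_{Θ,p}, and let λ_{Ψ,1} ≤ … ≤ λ_{Ψ,q} be reals with λ_{Θ,1} + λ_{Ψ,1} > 0. Fix 1 ≤ K ≤ q, set Ξ_{Θ,k} = (Λ_Θ + λ_{Ψ,k} I_p)^{-1}, and define the approximate Hessian block Ĥ_Θ = (Q_Θ⊗Q_Θ)·( Σ_{k=1}^K Ξ_{Θ,k}⊗Ξ_{Θ,k} + (q−K)·Ξ_{Θ,K}⊗Ξ_{Θ,K} )·(Q_Θ⊗Q_Θ)^T. Then Ĥ_Θ is symmetric positive definite, its smallest eigenvalue equals Σ_{i=1}^K (λ_{Θ,p} + λ_{Ψ,i})^{-2} + (q−K)(λ_{Θ,p} + λ_{Ψ,K})^{-2}, and its largest eigenvalue equals Σ_{i=1}^K (λ_{Θ,1} + λ_{Ψ,i})^{-2} + (q−K)(λ_{Θ,1} + λ_{Ψ,K})^{-2}. -/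

import Mathlib

open Matrix
open scoped Kronecker

namespace EiGLasso

/-- The Kronecker sum `Θ ⊕ Ψ = Θ ⊗ I_q + I_p ⊗ Ψ`. -/
def kronSum {p q : ℕ} (A : Matrix (Fin p) (Fin p) ℝ) (B : Matrix (Fin q) (Fin q) ℝ) :
    Matrix (Fin p × Fin q) (Fin p × Fin q) ℝ :=
  A ⊗ₖ (1 : Matrix (Fin q) (Fin q) ℝ) + (1 : Matrix (Fin p) (Fin p) ℝ) ⊗ₖ B

/-- The `pq × p` selection matrix `I_p ⊗ e_{q,i}`, where `e_{q,i}` is the `i`-th one-hot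
vector in `ℝ^q`.  Row `(j', i')` (i.e. row `(j'-1)q + i'`), column `j`. -/
def selTheta (p q : ℕ) (i : Fin q) : Matrix (Fin p × Fin q) (Fin p) ℝ :=
  Matrix.of fun x j => if x = (j, i) then (1 : ℝ) else 0

/-- The `pq × q` selection matrix `e_{p,j} ⊗ I_q`. -/
def selPsi (p q : ℕ) (j : Fin p) : Matrix (Fin p × Fin q) (Fin q) ℝ :=
  Matrix.of fun x i => if x = (j, i) then (1 : ℝ) else 0

/-- `P_Θ = ∑_{i=1}^q I_p ⊗ e_{q,i} ⊗ I_p ⊗ e_{q,i}`, a `p²q² × p²` matrix. -/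
def Ptheta (p q : ℕ) : Matrix ((Fin p × Fin q) × (Fin p × Fin q)) (Fin p × Fin p) ℝ :=
  ∑ i : Fin q, (selTheta p q i) ⊗ₖ (selTheta p q i)

/-- `P_Ψ = ∑_{j=1}^p e_{p,j} ⊗ I_q ⊗ e_{p,j} ⊗ I_q`, a `p²q² × q²` matrix. -/
def Ppsi (p q : ℕ) : Matrix ((Fin p × Fin q) × (Fin p × Fin q)) (Fin q × Fin q) ℝ :=
  ∑ j : Fin p, (selPsi p q j) ⊗ₖ (selPsi p q j)

/-- Column-stacking vectorization: `vec(A)` at index `(j, i)` (i.e. `(j-1)m + i`) is `A i j`. -/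
def vec {m n : Type*} (A : Matrix m n ℝ) : n × m → ℝ := fun x => A x.2 x.1


/-- `Ξ_{Θ,k} = (Λ_Θ + λ_{Ψ,k} I_p)⁻¹`. -/
noncomputable def Xi {p : ℕ} (dθ : Fin p → ℝ) (lamψ : ℝ) : Matrix (Fin p) (Fin p) ℝ :=
  (diagonal dθ + lamψ • (1 : Matrix (Fin p) (Fin p) ℝ))⁻¹

/-- The approximate Hessian block
`Ĥ_Θ = (Q_Θ⊗Q_Θ)(∑_{k=1}^K Ξ_{Θ,k}⊗Ξ_{Θ,k} + (q−K) Ξ_{Θ,K}⊗Ξ_{Θ,K})(Q_Θ⊗Q_Θ)ᵀ`. -/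
noncomputable def approxHTheta {p : ℕ} (q : ℕ) (Qθ : Matrix (Fin p) (Fin p) ℝ)
    (dθ : Fin p → ℝ) (dψ : Fin q → ℝ) (K : ℕ) (hK1 : 1 ≤ K) (hKq : K ≤ q) :
    Matrix (Fin p × Fin p) (Fin p × Fin p) ℝ :=
  (Qθ ⊗ₖ Qθ)
    * ((∑ k : Fin K, Xi dθ (dψ ⟨k.1, lt_of_lt_of_le k.isLt hKq⟩)
          ⊗ₖ Xi dθ (dψ ⟨k.1, lt_of_lt_of_le k.isLt hKq⟩))
        + ((q : ℝ) - (K : ℝ)) •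
          (Xi dθ (dψ ⟨K - 1, by omega⟩) ⊗ₖ Xi dθ (dψ ⟨K - 1, by omega⟩)))
    * (Qθ ⊗ₖ Qθ)ᵀ

lemma conj_isSymm {n : Type*} [Fintype n] [DecidableEq n] (Q : Matrix n n ℝ) (g : n → ℝ) :
    (Q * diagonal g * Qᵀ).IsSymm := by
  rw [Matrix.IsSymm, transpose_mul, transpose_mul, transpose_transpose, diagonal_transpose,
    mul_assoc]

lemma conj_posDef {n : Type*} [Fintype n] [DecidableEq n] (Q : Matrix n n ℝ)
    (hQ1 : Q * Qᵀ = 1) (g : n → ℝ) (hg : ∀ i, 0 < g i) :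
    (Q * diagonal g * Qᵀ).PosDef := by
  rw [posDef_iff_dotProduct_mulVec]
  constructor
  · rw [Matrix.IsHermitian, conjTranspose_eq_transpose_of_trivial]
    exact conj_isSymm Q g
  · intro x hx
    have hw0 : Qᵀ *ᵥ x ≠ 0 := by
      intro h
      apply hx
      have hxx : x = Q *ᵥ (Qᵀ *ᵥ x) := by rw [mulVec_mulVec, hQ1, one_mulVec]
      rw [hxx, h, mulVec_zero]
    set w := Qᵀ *ᵥ x with hw
    have key : star x ⬝ᵥ ((Q * diagonal g * Qᵀ) *ᵥ x) = ∑ i, g i * (w i * w i) := by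
      rw [star_trivial, ← mulVec_mulVec, ← mulVec_mulVec,
        Matrix.dotProduct_mulVec, ← mulVec_transpose, ← hw]
      simp only [dotProduct, mulVec_diagonal]
      exact Finset.sum_congr rfl fun i _ => by ring
    rw [key]
    obtain ⟨i, hi⟩ := Function.ne_iff.mp hw0
    exact Finset.sum_pos' (fun j _ => mul_nonneg (hg j).le (mul_self_nonneg _))
      ⟨i, Finset.mem_univ i, mul_pos (hg i) (mul_self_pos.mpr hi)⟩

lemma conj_eig_iff {n : Type*} [Fintype n] [DecidableEq n] (Q : Matrix n n ℝ)
    (hQ1 : Q * Qᵀ = 1) (hQ2 : Qᵀ * Q = 1) (g : n → ℝ) (μ : ℝ) :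
    (∃ v : n → ℝ, v ≠ 0 ∧ (Q * diagonal g * Qᵀ).mulVec v = μ • v) ↔ ∃ i, g i = μ := by
  constructor
  · rintro ⟨v, hv0, hv⟩
    set w := Qᵀ *ᵥ v with hw
    have hw0 : w ≠ 0 := by
      intro h
      apply hv0
      have hxx : v = Q *ᵥ w := by rw [hw, mulVec_mulVec, hQ1, one_mulVec]
      rw [hxx, h, mulVec_zero]
    have key : Qᵀ * (Q * diagonal g * Qᵀ) = diagonal g * Qᵀ := by
      rw [← mul_assoc, ← mul_assoc, hQ2, one_mul]
    have hDw : diagonal g *ᵥ w = μ • w := by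
      have h1 := congrArg (fun u => Qᵀ *ᵥ u) hv
      simp only [Matrix.mulVec_smul] at h1
      rwa [mulVec_mulVec, key, ← mulVec_mulVec, ← hw] at h1
    obtain ⟨i, hi⟩ := Function.ne_iff.mp hw0
    simp only [Pi.zero_apply] at hi
    refine ⟨i, mul_right_cancel₀ hi ?_⟩
    have h2 := congrFun hDw i
    rw [mulVec_diagonal] at h2
    simpa using h2
  · rintro ⟨i, rfl⟩
    refine ⟨Q *ᵥ (Pi.single i 1 : n → ℝ), ?_, ?_⟩
    · intro h
      have h2 : Qᵀ *ᵥ (Q *ᵥ (Pi.single i 1 : n → ℝ)) = (Pi.single i 1 : n → ℝ) := by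
        rw [mulVec_mulVec, hQ2, one_mulVec]
      rw [h, mulVec_zero] at h2
      simpa using congrFun h2 i
    · have hDe : diagonal g *ᵥ (Pi.single i 1 : n → ℝ) = g i • (Pi.single i 1 : n → ℝ) := by
        funext j
        rw [mulVec_diagonal]
        by_cases h : j = i
        · subst h; simp
        · simp [Pi.single_eq_of_ne h]
      calc (Q * diagonal g * Qᵀ) *ᵥ (Q *ᵥ (Pi.single i 1 : n → ℝ))
          = (Q * diagonal g * (Qᵀ * Q)) *ᵥ (Pi.single i 1 : n → ℝ) := by
            rw [mulVec_mulVec, mul_assoc]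
        _ = (Q * diagonal g) *ᵥ (Pi.single i 1 : n → ℝ) := by rw [hQ2, mul_one]
        _ = Q *ᵥ (diagonal g *ᵥ (Pi.single i 1 : n → ℝ)) := (mulVec_mulVec _ _ _).symm
        _ = g i • (Q *ᵥ (Pi.single i 1 : n → ℝ)) := by rw [hDe, mulVec_smul]

lemma Xi_eq {p : ℕ} (dθ : Fin p → ℝ) (c : ℝ) (h : ∀ a, dθ a + c ≠ 0) :
    Xi dθ c = diagonal (fun a => (dθ a + c)⁻¹) := by
  have h1 : diagonal dθ + c • (1 : Matrix (Fin p) (Fin p) ℝ)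
      = diagonal (fun a => dθ a + c) := by
    ext i j
    by_cases hij : i = j
    · subst hij; simp
    · simp [Matrix.diagonal_apply_ne _ hij, Matrix.one_apply_ne hij]
  rw [Xi, h1]
  apply inv_eq_right_inv
  have h2 : (fun a => (dθ a + c) * (dθ a + c)⁻¹) = fun _ : Fin p => (1 : ℝ) :=
    funext fun a => mul_inv_cancel₀ (h a)
  rw [diagonal_mul_diagonal, h2, diagonal_one]

noncomputable def gfun (p q K : ℕ) (dθ : Fin p → ℝ) (dψ : Fin q → ℝ)
    (hK1 : 1 ≤ K) (hKq : K ≤ q) : Fin p × Fin p → ℝ := fun x =>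
  (∑ k : Fin K, (dθ x.1 + dψ ⟨k.1, lt_of_lt_of_le k.isLt hKq⟩)⁻¹ *
      (dθ x.2 + dψ ⟨k.1, lt_of_lt_of_le k.isLt hKq⟩)⁻¹)
    + ((q : ℝ) - (K : ℝ)) *
      ((dθ x.1 + dψ ⟨K - 1, by omega⟩)⁻¹ * (dθ x.2 + dψ ⟨K - 1, by omega⟩)⁻¹)

/-- The approximate Hessian block `Ĥ_Θ` is symmetric positive definite;
its smallest eigenvalue is `∑_{i=1}^K (λ_{Θ,p}+λ_{Ψ,i})⁻² + (q−K)(λ_{Θ,p}+λ_{Ψ,K})⁻²` and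
its largest eigenvalue is `∑_{i=1}^K (λ_{Θ,1}+λ_{Ψ,i})⁻² + (q−K)(λ_{Θ,1}+λ_{Ψ,K})⁻²`. -/
theorem approxHessian_posdef_eigs (p q : ℕ) (hp : 1 ≤ p) (hq : 1 ≤ q)
    (Qθ : Matrix (Fin p) (Fin p) ℝ) (hQθ : Qθ * Qθᵀ = 1) (hQθ' : Qθᵀ * Qθ = 1)
    (dθ : Fin p → ℝ) (hdθ : Monotone dθ)
    (dψ : Fin q → ℝ) (hdψ : Monotone dψ)
    (hpos : 0 < dθ ⟨0, hp⟩ + dψ ⟨0, hq⟩)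
    (K : ℕ) (hK1 : 1 ≤ K) (hKq : K ≤ q) :
    (approxHTheta q Qθ dθ dψ K hK1 hKq).IsSymm ∧
    (approxHTheta q Qθ dθ dψ K hK1 hKq).PosDef ∧
    IsLeast {μ : ℝ | ∃ v : (Fin p × Fin p) → ℝ, v ≠ 0 ∧
        (approxHTheta q Qθ dθ dψ K hK1 hKq).mulVec v = μ • v}
      ((∑ i : Fin K, ((dθ ⟨p - 1, by omega⟩
            + dψ ⟨i.1, lt_of_lt_of_le i.isLt hKq⟩) ^ 2)⁻¹)
        + ((q : ℝ) - (K : ℝ))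
            * ((dθ ⟨p - 1, by omega⟩ + dψ ⟨K - 1, by omega⟩) ^ 2)⁻¹) ∧
    IsGreatest {μ : ℝ | ∃ v : (Fin p × Fin p) → ℝ, v ≠ 0 ∧
        (approxHTheta q Qθ dθ dψ K hK1 hKq).mulVec v = μ • v}
      ((∑ i : Fin K, ((dθ ⟨0, hp⟩
            + dψ ⟨i.1, lt_of_lt_of_le i.isLt hKq⟩) ^ 2)⁻¹)
        + ((q : ℝ) - (K : ℝ))
            * ((dθ ⟨0, hp⟩ + dψ ⟨K - 1, by omega⟩) ^ 2)⁻¹) := by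
  have hpos' : ∀ (a : Fin p) (k : Fin q), 0 < dθ a + dψ k := fun a k =>
    lt_of_lt_of_le hpos
      (add_le_add (hdθ (Fin.le_def.mpr (Nat.zero_le _))) (hdψ (Fin.le_def.mpr (Nat.zero_le _))))
  have hinvpos : ∀ (a : Fin p) (k : Fin q), 0 < (dθ a + dψ k)⁻¹ := fun a k =>
    inv_pos.mpr (hpos' a k)
  have hqK : (0 : ℝ) ≤ (q : ℝ) - (K : ℝ) := sub_nonneg.mpr (Nat.cast_le.mpr hKq)
  haveI : Nonempty (Fin K) := ⟨⟨0, hK1⟩⟩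
  set g := gfun p q K dθ dψ hK1 hKq with hg
  have hgpos : ∀ x, 0 < g x := fun x =>
    add_pos_of_pos_of_nonneg
      (Finset.sum_pos (fun k _ => mul_pos (hinvpos _ _) (hinvpos _ _)) Finset.univ_nonempty)
      (mul_nonneg hqK (mul_nonneg (hinvpos _ _).le (hinvpos _ _).le))
  have hXik : ∀ k : Fin q, Xi dθ (dψ k) = diagonal (fun a => (dθ a + dψ k)⁻¹) :=
    fun k => Xi_eq dθ (dψ k) (fun a => (hpos' a k).ne')
  have hH : approxHTheta q Qθ dθ dψ K hK1 hKq
      = (Qθ ⊗ₖ Qθ) * diagonal g * (Qθ ⊗ₖ Qθ)ᵀ := by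
    unfold approxHTheta
    congr 2
    simp only [hXik, diagonal_kronecker_diagonal]
    ext x y
    by_cases hxy : x = y
    · subst hxy
      simp [Matrix.sum_apply, hg, gfun]
    · simp [Matrix.sum_apply, Matrix.diagonal_apply_ne _ hxy]
  have hT : (Qθ ⊗ₖ Qθ)ᵀ = Qθᵀ ⊗ₖ Qθᵀ := Matrix.ext fun _ _ => rfl
  have hQ1 : (Qθ ⊗ₖ Qθ) * (Qθ ⊗ₖ Qθ)ᵀ = 1 := by
    rw [hT, ← mul_kronecker_mul, hQθ, one_kronecker_one]
  have hQ2 : (Qθ ⊗ₖ Qθ)ᵀ * (Qθ ⊗ₖ Qθ) = 1 := by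
    rw [hT, ← mul_kronecker_mul, hQθ', one_kronecker_one]
  have hset : ∀ μ : ℝ, (∃ v : (Fin p × Fin p) → ℝ, v ≠ 0 ∧
      (approxHTheta q Qθ dθ dψ K hK1 hKq).mulVec v = μ • v) ↔ ∃ x, g x = μ := by
    intro μ
    rw [hH]
    exact conj_eig_iff _ hQ1 hQ2 g μ
  have hmono : ∀ (a b : Fin p) (k : Fin q), a ≤ b → (dθ b + dψ k)⁻¹ ≤ (dθ a + dψ k)⁻¹ :=
    fun a b k hab => inv_anti₀ (hpos' a k) (add_le_add_left (hdθ hab) _)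
  have hle_l : ∀ a : Fin p, a ≤ ⟨p - 1, by omega⟩ :=
    fun a => Fin.le_def.mpr (show a.1 ≤ p - 1 by have := a.isLt; omega)
  have hz_le : ∀ a : Fin p, (⟨0, hp⟩ : Fin p) ≤ a := fun a => Fin.le_def.mpr (Nat.zero_le _)
  have hgmin : ∀ x, g (⟨p - 1, by omega⟩, ⟨p - 1, by omega⟩) ≤ g x := fun x =>
    add_le_add
      (Finset.sum_le_sum fun k _ =>
        mul_le_mul (hmono _ _ _ (hle_l x.1)) (hmono _ _ _ (hle_l x.2))
          (hinvpos _ _).le (hinvpos _ _).le)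
      (mul_le_mul_of_nonneg_left
        (mul_le_mul (hmono _ _ _ (hle_l x.1)) (hmono _ _ _ (hle_l x.2))
          (hinvpos _ _).le (hinvpos _ _).le) hqK)
  have hgmax : ∀ x, g x ≤ g (⟨0, hp⟩, ⟨0, hp⟩) := fun x =>
    add_le_add
      (Finset.sum_le_sum fun k _ =>
        mul_le_mul (hmono _ _ _ (hz_le x.1)) (hmono _ _ _ (hz_le x.2))
          (hinvpos _ _).le (hinvpos _ _).le)
      (mul_le_mul_of_nonneg_left
        (mul_le_mul (hmono _ _ _ (hz_le x.1)) (hmono _ _ _ (hz_le x.2))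
          (hinvpos _ _).le (hinvpos _ _).le) hqK)
  have hmin_eq : ((∑ i : Fin K, ((dθ ⟨p - 1, by omega⟩
        + dψ ⟨i.1, lt_of_lt_of_le i.isLt hKq⟩) ^ 2)⁻¹)
      + ((q : ℝ) - (K : ℝ))
          * ((dθ ⟨p - 1, by omega⟩ + dψ ⟨K - 1, by omega⟩) ^ 2)⁻¹)
      = g (⟨p - 1, by omega⟩, ⟨p - 1, by omega⟩) := by
    simp [hg, gfun, pow_two, mul_inv]
  have hmax_eq : ((∑ i : Fin K, ((dθ ⟨0, hp⟩
        + dψ ⟨i.1, lt_of_lt_of_le i.isLt hKq⟩) ^ 2)⁻¹)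
      + ((q : ℝ) - (K : ℝ))
          * ((dθ ⟨0, hp⟩ + dψ ⟨K - 1, by omega⟩) ^ 2)⁻¹)
      = g (⟨0, hp⟩, ⟨0, hp⟩) := by
    simp [hg, gfun, pow_two, mul_inv]
  refine ⟨by rw [hH]; exact conj_isSymm _ _,
    by rw [hH]; exact conj_posDef _ hQ1 g hgpos, ⟨?_, ?_⟩, ⟨?_, ?_⟩⟩
  · exact (hset _).mpr ⟨_, hmin_eq.symm⟩
  · intro μ hμ
    obtain ⟨x, hx⟩ := (hset μ).mp hμ
    rw [← hx, hmin_eq]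
    exact hgmin x
  · exact (hset _).mpr ⟨_, hmax_eq.symm⟩
  · intro μ hμ
    obtain ⟨x, hx⟩ := (hset μ).mp hμ
    rw [← hx, hmax_eq]
    exact hgmax x


end EiGLasso
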